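/- In the formal power series ring R⟦x,y,t⟧, the generating function S(t,x,y) := ∑_{r≥0} ∑_{n≥k≥0} B^r_{n+r,k+r} x^n y^r t^k/(n!·r!) factorizes as S(t,x,y) = S^•(xt,x,y) · Z(x,t), where S^•(xt,x,y) := ∑_{n,r,k≥0} ∂^n(a_1^r b_1^k) · x^{n+k} y^r t^k/(n!·r!·k!) and Z(x,t) := exp( −t·∑_{i≥2} ((i−1)/i!)·b_i x^i ). -/

import Mathlib

noncomputable section

/-- `R = ℚ[a_1,a_2,…;b_1,b_2,…]`, realized as the polynomial ring over `ℚ` with variables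
`X (true, i) = a_i` and `X (false, i) = b_i`. -/
abbrev RR : Type := MvPolynomial (Bool × ℕ) ℚ

/-- the variable `a_i` -/
def va (i : ℕ) : RR := MvPolynomial.X (true, i)
/-- the variable `b_i` -/
def vb (i : ℕ) : RR := MvPolynomial.X (false, i)

/-- the derivation `∂` of `R` with `∂ a_i = a_{i+1}` and `∂ b_i = b_{i+1}` -/
def del : RR → RR :=
  fun p => MvPolynomial.mkDerivation ℚ (fun s : Bool × ℕ => MvPolynomial.X (s.1, s.2 + 1)) p

/-- coefficientwise extension of a map on coefficients to `A[t]` (i.e. `∂` with `∂ t = 0`) -/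
def polyLift {A : Type*} [Semiring A] (D : A → A) (p : Polynomial A) : Polynomial A :=
  p.sum fun i c => Polynomial.C (D c) * Polynomial.X ^ i

/-- the map `E : R[t] → R[t]`, `E(p) = t·b_1·p + ∂(p)` -/
def EOp (p : Polynomial RR) : Polynomial RR :=
  Polynomial.C (vb 1) * Polynomial.X * p + polyLift del p

/-- the partial `r`-Bell polynomial `B^r_{n+r,k+r}`: the coefficient of `t^k` in `E^n(a_1^r)` -/
def rBell (n k r : ℕ) : RR := (EOp^[n] (Polynomial.C (va 1 ^ r))).coeff k

/-- Exponential of a formal multivariate power series (intended for series with zero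
constant term): `exp(u) = ∑_{j≥0} u^j/j!`; for a series `u` of positive order only the
terms with `j ≤ |d|` contribute to the coefficient of a monomial of total degree `|d|`. -/
def sexp {σ : Type*} {A : Type*} [Ring A] [Algebra ℚ A] (u : MvPowerSeries σ A) :
    MvPowerSeries σ A :=
  fun d => MvPowerSeries.coeff d
    (∑ j ∈ Finset.range (d.sum (fun _ m => m) + 1), (j.factorial : ℚ)⁻¹ • u ^ j)

/-- The generating series `S(t,x,y) = ∑_{r≥0} ∑_{n≥k≥0} B^r_{n+r,k+r} x^n y^r t^k/(n!·r!)`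
in `R⟦x,y,t⟧` (coordinates `0 ↦ x`, `1 ↦ y`, `2 ↦ t`). -/
def Sgen : MvPowerSeries (Fin 3) RR :=
  fun d => if d 2 ≤ d 0 then
    (((d 0).factorial * (d 1).factorial : ℚ))⁻¹ • rBell (d 0) (d 2) (d 1)
  else 0

/-- The series `S^•(xt,x,y) = ∑_{n,r,k≥0} ∂^n(a_1^r b_1^k)·x^{n+k} y^r t^k/(n!·r!·k!)`
in `R⟦x,y,t⟧`: the coefficient of `x^α y^β t^γ` is `∂^{α-γ}(a_1^β b_1^γ)/((α-γ)!·β!·γ!)`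
when `γ ≤ α`, and `0` otherwise. -/
def Sbul : MvPowerSeries (Fin 3) RR :=
  fun d => if d 2 ≤ d 0 then
    (((d 0 - d 2).factorial * (d 1).factorial * (d 2).factorial : ℚ))⁻¹ •
      del^[d 0 - d 2] (va 1 ^ d 1 * vb 1 ^ d 2)
  else 0

/-- the series `−t·∑_{i≥2} ((i−1)/i!)·b_i x^i` in `R⟦x,y,t⟧` -/
def Zarg : MvPowerSeries (Fin 3) RR :=
  fun d => if d 1 = 0 ∧ d 2 = 1 ∧ 2 ≤ d 0 then
    (-(((d 0 : ℚ) - 1) / ((d 0).factorial : ℚ))) • vb (d 0)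
  else 0




-- basic del lemmas
def delD : Derivation ℚ RR RR :=
  MvPolynomial.mkDerivation ℚ (fun s : Bool × ℕ => MvPolynomial.X (s.1, s.2 + 1))

lemma del_eq (p : RR) : del p = delD p := rfl

lemma del_add (p q : RR) : del (p + q) = del p + del q := by
  simp [del_eq, map_add]

lemma del_zero : del (0 : RR) = 0 := by simp [del_eq]

lemma del_smul (c : ℚ) (p : RR) : del (c • p) = c • del p := by
  simp [del_eq, map_smul]

lemma del_mul (p q : RR) : del (p * q) = del p * q + p * del q := by
  simp only [del_eq, Derivation.leibniz, smul_eq_mul]; ring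

lemma del_vb (i : ℕ) : del (vb i) = vb (i + 1) := by
  simp [del_eq, delD, vb, MvPolynomial.mkDerivation_X]

lemma del_iter_vb (m i : ℕ) : del^[m] (vb i) = vb (i + m) := by
  induction m with
  | zero => rfl
  | succ m ih => rw [Function.iterate_succ_apply', ih, del_vb, add_assoc]

abbrev PS := MvPowerSeries (Fin 3) RR

def e0 : Fin 3 →₀ ℕ := Finsupp.single 0 1
def e2 : Fin 3 →₀ ℕ := Finsupp.single 2 1

lemma fin3_ext {p q : Fin 3 →₀ ℕ} (h0 : p 0 = q 0) (h1 : p 1 = q 1) (h2 : p 2 = q 2) :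
    p = q := by
  ext a; fin_cases a <;> assumption

@[simp] lemma e0_apply0 : e0 0 = 1 := by simp [e0]
@[simp] lemma e0_apply1 : e0 1 = 0 := by simp [e0]
@[simp] lemma e0_apply2 : e0 2 = 0 := by simp [e0]
@[simp] lemma e2_apply0 : e2 0 = 0 := by simp [e2]
@[simp] lemma e2_apply1 : e2 1 = 0 := by simp [e2]
@[simp] lemma e2_apply2 : e2 2 = 1 := by simp [e2]

def Dc (f : PS) : PS := fun d => del (f d)
def Dx (f : PS) : PS := fun d => (d 0 + 1) • f (d + e0)

lemma PS_coeff (f : PS) (d : Fin 3 →₀ ℕ) : MvPowerSeries.coeff d f = f d := rfl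
lemma PS_add_apply (f g : PS) (d : Fin 3 →₀ ℕ) : (f + g) d = f d + g d := rfl
lemma PS_smul_apply (c : ℚ) (f : PS) (d : Fin 3 →₀ ℕ) : (c • f) d = c • f d := rfl

lemma Dc_mul (f g : PS) : Dc (f * g) = Dc f * g + f * Dc g := by
  funext d
  show del (MvPowerSeries.coeff d (f * g)) = _
  rw [PS_add_apply, show (Dc f * g) d = MvPowerSeries.coeff d (Dc f * g) from rfl,
    show (f * Dc g) d = MvPowerSeries.coeff d (f * Dc g) from rfl,
    MvPowerSeries.coeff_mul, MvPowerSeries.coeff_mul, MvPowerSeries.coeff_mul]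
  rw [show del = ⇑delD.toLinearMap from rfl, map_sum, ← Finset.sum_add_distrib]
  refine Finset.sum_congr rfl fun p _ => ?_
  show del _ = _
  rw [del_mul]
  rfl

section
variable (f g : PS)

lemma coord_eq {p q d : Fin 3 →₀ ℕ} (h : p + q = d) (a : Fin 3) : p a + q a = d a := by
  rw [← Finsupp.add_apply, h]

lemma shift_sum (d : Fin 3 →₀ ℕ) (F : (Fin 3 →₀ ℕ) → (Fin 3 →₀ ℕ) → RR) :
    ∑ p ∈ Finset.HasAntidiagonal.antidiagonal (d + e0), (p.1 0) • F p.1 p.2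
      = ∑ q ∈ Finset.HasAntidiagonal.antidiagonal d, (q.1 0 + 1) • F (q.1 + e0) q.2 := by
  classical
  rw [← Finset.sum_filter_of_ne
    (p := fun p : (Fin 3 →₀ ℕ) × (Fin 3 →₀ ℕ) => p.1 0 ≠ 0)
    (by intro p _ h h0; apply h; rw [h0]; simp)]
  refine Finset.sum_nbij' (i := fun p => (p.1 - e0, p.2)) (j := fun q => (q.1 + e0, q.2))
    ?_ ?_ ?_ ?_ ?_
  · intro p hp
    simp only [Finset.mem_filter, Finset.HasAntidiagonal.mem_antidiagonal] at hp
    rw [Finset.HasAntidiagonal.mem_antidiagonal]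
    refine fin3_ext ?_ ?_ ?_ <;>
    · have h0 := coord_eq hp.1 0
      have h1 := coord_eq hp.1 1
      have h2 := coord_eq hp.1 2
      have hne := hp.2
      simp only [Finsupp.add_apply, Finsupp.tsub_apply, e0_apply0, e0_apply1, e0_apply2] at *
      omega
  · intro q hq
    rw [Finset.HasAntidiagonal.mem_antidiagonal] at hq
    simp only [Finset.mem_filter, Finset.HasAntidiagonal.mem_antidiagonal]
    constructor
    · refine fin3_ext ?_ ?_ ?_ <;>
      · have h0 := coord_eq hq 0
        have h1 := coord_eq hq 1
        have h2 := coord_eq hq 2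
        simp only [Finsupp.add_apply, e0_apply0, e0_apply1, e0_apply2] at *
        omega
    · simp [Finsupp.add_apply]
  · intro p hp
    simp only [Finset.mem_filter, Finset.HasAntidiagonal.mem_antidiagonal] at hp
    have : p.1 - e0 + e0 = p.1 := by
      refine fin3_ext ?_ ?_ ?_ <;>
      · have hne := hp.2
        simp only [Finsupp.add_apply, Finsupp.tsub_apply, e0_apply0, e0_apply1, e0_apply2] at *
        omega
    simp [this]
  · intro q hq
    have : q.1 + e0 - e0 = q.1 := by
      refine fin3_ext ?_ ?_ ?_ <;>
      · simp only [Finsupp.add_apply, Finsupp.tsub_apply, e0_apply0, e0_apply1, e0_apply2]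
        omega
    simp [this]
  · intro p hp
    simp only [Finset.mem_filter, Finset.HasAntidiagonal.mem_antidiagonal] at hp
    have h1 : p.1 - e0 + e0 = p.1 := by
      refine fin3_ext ?_ ?_ ?_ <;>
      · have hne := hp.2
        simp only [Finsupp.add_apply, Finsupp.tsub_apply, e0_apply0, e0_apply1, e0_apply2] at *
        omega
    have h2 : (p.1 - e0) 0 + 1 = p.1 0 := by
      have hne := hp.2
      simp only [Finsupp.tsub_apply, e0_apply0]
      omega
    rw [h1, h2]

lemma swap_sum (d : Fin 3 →₀ ℕ) (G : (Fin 3 →₀ ℕ) × (Fin 3 →₀ ℕ) → RR) :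
    ∑ p ∈ Finset.HasAntidiagonal.antidiagonal d, G p = ∑ p ∈ Finset.HasAntidiagonal.antidiagonal d, G p.swap := by
  refine Finset.sum_nbij' (i := Prod.swap) (j := Prod.swap) ?_ ?_ ?_ ?_ ?_ <;>
    simp [Finset.HasAntidiagonal.mem_antidiagonal, add_comm]

lemma Dx_mul : Dx (f * g) = Dx f * g + f * Dx g := by
  funext d
  show (d 0 + 1) • MvPowerSeries.coeff (d + e0) (f * g) = _
  rw [PS_add_apply,
    show (Dx f * g) d = MvPowerSeries.coeff d (Dx f * g) from rfl,
    show (f * Dx g) d = MvPowerSeries.coeff d (f * Dx g) from rfl,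
    MvPowerSeries.coeff_mul, MvPowerSeries.coeff_mul, MvPowerSeries.coeff_mul,
    Finset.smul_sum]
  have key : ∀ p ∈ Finset.HasAntidiagonal.antidiagonal (d + e0),
      (d 0 + 1) • (MvPowerSeries.coeff p.1 f * MvPowerSeries.coeff p.2 g)
      = (p.1 0) • (f p.1 * g p.2) + (p.2 0) • (f p.1 * g p.2) := by
    intro p hp
    rw [Finset.HasAntidiagonal.mem_antidiagonal] at hp
    have := coord_eq hp 0
    simp only [Finsupp.add_apply, e0_apply0] at this
    rw [← add_smul]
    rw [show MvPowerSeries.coeff p.1 f = f p.1 from rfl,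
      show MvPowerSeries.coeff p.2 g = g p.2 from rfl]
    congr 1
    omega
  rw [Finset.sum_congr rfl key, Finset.sum_add_distrib]
  congr 1
  · rw [shift_sum d (fun p q => f p * g q)]
    refine Finset.sum_congr rfl fun q _ => ?_
    show _ = Dx f q.1 * g q.2
    show _ = ((q.1 0 + 1) • f (q.1 + e0)) * g q.2
    rw [smul_mul_assoc]
  · rw [swap_sum (d+e0) (fun p => (p.2 0) • (f p.1 * g p.2))]
    simp only [Prod.fst_swap, Prod.snd_swap]
    rw [shift_sum d (fun p q => f q * g p),
      swap_sum d (fun q => (q.1 0 + 1) • (f q.2 * g (q.1 + e0)))]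
    simp only [Prod.fst_swap, Prod.snd_swap]
    refine Finset.sum_congr rfl fun q _ => ?_
    show _ = f q.1 * Dx g q.2
    show _ = f q.1 * ((q.2 0 + 1) • g (q.2 + e0))
    rw [mul_smul_comm]
end



lemma Dc_add (f g : PS) : Dc (f + g) = Dc f + Dc g := by
  funext d; exact del_add _ _
lemma Dc_smul (c : ℚ) (f : PS) : Dc (c • f) = c • Dc f := by
  funext d; exact del_smul _ _
lemma Dx_add (f g : PS) : Dx (f + g) = Dx f + Dx g := by
  funext d; show (d 0 + 1) • ((f + g) (d + e0)) = _; rw [PS_add_apply, smul_add]; rfl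
lemma Dx_smul (c : ℚ) (f : PS) : Dx (c • f) = c • Dx f := by
  funext d; show (d 0 + 1) • ((c • f) (d + e0)) = _
  rw [PS_smul_apply, smul_comm]; rfl

section Der
variable (Δ : PS → PS)
  (hadd : ∀ f g, Δ (f + g) = Δ f + Δ g)
  (hsmul : ∀ (c : ℚ) (f : PS), Δ (c • f) = c • Δ f)
  (hmul : ∀ f g, Δ (f * g) = Δ f * g + f * Δ g)

include hsmul in
lemma der_zero : Δ 0 = 0 := by
  have := hsmul 0 0; simpa using this

include hmul in
lemma der_one : Δ 1 = 0 := by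
  have h := hmul 1 1
  rw [mul_one, mul_one, one_mul] at h
  have : Δ 1 + Δ 1 = Δ 1 + 0 := by rw [← h, add_zero]
  exact (add_left_cancel this)

include hadd hsmul in
lemma der_sum {α : Type*} (s : Finset α) (F : α → PS) :
    Δ (∑ i ∈ s, F i) = ∑ i ∈ s, Δ (F i) := by
  classical
  induction s using Finset.induction_on with
  | empty => simpa using der_zero Δ hsmul
  | insert a s h ih => rw [Finset.sum_insert h, Finset.sum_insert h, hadd, ih]

include hmul in
lemma der_pow (u : PS) : ∀ j : ℕ, Δ (u ^ (j + 1)) = (j + 1) • (u ^ j * Δ u) := by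
  intro j
  induction j with
  | zero => rw [pow_one, pow_zero, one_mul, zero_add, one_smul]
  | succ j ih =>
    rw [pow_succ, hmul, ih, smul_mul_assoc, mul_right_comm, ← pow_succ,
      succ_nsmul, succ_nsmul, succ_nsmul]

def VV (u : PS) (K : ℕ) : PS := ∑ j ∈ Finset.range (K + 1), (j.factorial : ℚ)⁻¹ • u ^ j

include hadd hsmul hmul in
lemma der_V (u : PS) (K : ℕ) : Δ (VV u (K + 1)) = VV u K * Δ u := by
  rw [VV, der_sum Δ hadd hsmul]
  rw [Finset.sum_range_succ']
  simp only [hsmul]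
  have h0 : (Nat.factorial 0 : ℚ)⁻¹ • Δ (u ^ 0) = 0 := by
    rw [pow_zero, der_one Δ hmul, smul_zero]
  rw [h0, add_zero]
  have hterm : ∀ j : ℕ, ((j + 1).factorial : ℚ)⁻¹ • Δ (u ^ (j + 1))
      = ((j.factorial : ℚ)⁻¹ • u ^ j) * Δ u := by
    intro j
    rw [der_pow Δ hmul, ← Nat.cast_smul_eq_nsmul ℚ, smul_smul, smul_mul_assoc]
    congr 1
    rw [Nat.factorial_succ]
    push_cast
    have h1 : (j.factorial : ℚ) ≠ 0 := Nat.cast_ne_zero.mpr (Nat.factorial_ne_zero _)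
    field_simp
  rw [Finset.sum_congr rfl fun j _ => hterm j, ← Finset.sum_mul, VV]

end Der

def deg (d : Fin 3 →₀ ℕ) : ℕ := d.sum fun _ m => m

lemma deg_add (p q : Fin 3 →₀ ℕ) : deg (p + q) = deg p + deg q :=
  Finsupp.sum_add_index' (fun _ => rfl) (fun _ _ _ => rfl)

lemma deg_e0 : deg e0 = 1 := by
  rw [deg, e0, Finsupp.sum_single_index rfl]

lemma deg_pos {p : Fin 3 →₀ ℕ} (h : p ≠ 0) : 1 ≤ deg p := by
  by_contra hc
  push_neg at hc
  apply h
  have h0 : deg p = 0 := by omega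
  rw [deg, Finsupp.sum] at h0
  ext a
  by_cases ha : a ∈ p.support
  · exact absurd (Finset.sum_eq_zero_iff.mp h0 a ha) (Finsupp.mem_support_iff.mp ha)
  · simpa using Finsupp.notMem_support_iff.mp ha

lemma pow_coeff_zero (u : PS) (hu : u 0 = 0) : ∀ j, ∀ d, deg d < j → (u ^ j) d = 0 := by
  intro j
  induction j with
  | zero => intro d hd; omega
  | succ j ih =>
    intro d hd
    rw [pow_succ, show (u ^ j * u) d = MvPowerSeries.coeff d (u ^ j * u) from rfl,
      MvPowerSeries.coeff_mul]
    refine Finset.sum_eq_zero fun p hp => ?_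
    rw [Finset.HasAntidiagonal.mem_antidiagonal] at hp
    by_cases h2 : p.2 = 0
    · rw [show MvPowerSeries.coeff p.2 u = u p.2 from rfl, h2, hu, mul_zero]
    · have hdeg : deg p.1 + deg p.2 = deg d := by rw [← deg_add, hp]
      have := deg_pos h2
      have : deg p.1 < j := by omega
      rw [show MvPowerSeries.coeff p.1 (u ^ j) = (u ^ j) p.1 from rfl, ih p.1 this, zero_mul]

lemma sexp_eq (u : PS) (hu : u 0 = 0) (d : Fin 3 →₀ ℕ) (M : ℕ) (hM : deg d ≤ M) :
    sexp u d = VV u M d := by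
  have hL : sexp u d = ∑ j ∈ Finset.range (deg d + 1), (j.factorial : ℚ)⁻¹ • ((u ^ j) d) := by
    rw [sexp, show d.sum (fun _ m => m) = deg d from rfl]
    rw [map_sum]
    refine Finset.sum_congr rfl fun j _ => ?_
    rfl
  have hR : VV u M d = ∑ j ∈ Finset.range (M + 1), (j.factorial : ℚ)⁻¹ • ((u ^ j) d) := by
    rw [VV, show (∑ j ∈ Finset.range (M+1), (j.factorial : ℚ)⁻¹ • u ^ j) d
      = MvPowerSeries.coeff d (∑ j ∈ Finset.range (M+1), (j.factorial : ℚ)⁻¹ • u ^ j) from rfl,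
      map_sum]
    refine Finset.sum_congr rfl fun j _ => ?_
    rfl
  rw [hL, hR]
  refine Finset.sum_subset (by intro j hj; simp only [Finset.mem_range] at *; omega) ?_
  intro j hj hj'
  simp only [Finset.mem_range] at hj hj'
  rw [pow_coeff_zero u hu j d (by omega), smul_zero]

lemma mul_congr_right (f g g' : PS) (d : Fin 3 →₀ ℕ)
    (h : ∀ q, q ≤ d → g q = g' q) : (f * g) d = (f * g') d := by
  rw [show (f * g) d = MvPowerSeries.coeff d (f * g) from rfl,
    show (f * g') d = MvPowerSeries.coeff d (f * g') from rfl,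
    MvPowerSeries.coeff_mul, MvPowerSeries.coeff_mul]
  refine Finset.sum_congr rfl fun p hp => ?_
  rw [Finset.HasAntidiagonal.mem_antidiagonal] at hp
  have : p.2 ≤ d := hp ▸ le_add_self
  rw [show MvPowerSeries.coeff p.2 g = g p.2 from rfl,
    show MvPowerSeries.coeff p.2 g' = g' p.2 from rfl, h p.2 this]

lemma deg_le_of_le {q d : Fin 3 →₀ ℕ} (h : q ≤ d) : deg q ≤ deg d := by
  obtain ⟨c, rfl⟩ := le_iff_exists_add.mp h
  rw [deg_add]; omega

lemma Dc_sexp (u : PS) (hu : u 0 = 0) : Dc (sexp u) = Dc u * sexp u := by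
  funext d
  have h1 : Dc (sexp u) d = Dc (VV u (deg d + 1)) d := by
    show del (sexp u d) = del (VV u (deg d + 1) d)
    rw [sexp_eq u hu d (deg d + 1) (by omega)]
  rw [h1, der_V Dc Dc_add Dc_smul Dc_mul u (deg d), mul_comm]
  exact (mul_congr_right (Dc u) (sexp u) (VV u (deg d)) d
    (fun q hq => sexp_eq u hu q (deg d) (deg_le_of_le hq))).symm

lemma Dx_sexp (u : PS) (hu : u 0 = 0) : Dx (sexp u) = Dx u * sexp u := by
  funext d
  have h1 : Dx (sexp u) d = Dx (VV u (deg d + 1)) d := by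
    show (d 0 + 1) • (sexp u (d + e0)) = (d 0 + 1) • (VV u (deg d + 1) (d + e0))
    rw [sexp_eq u hu (d + e0) (deg d + 1) (by rw [deg_add, deg_e0])]
  rw [h1, der_V Dx Dx_add Dx_smul Dx_mul u (deg d), mul_comm]
  exact (mul_congr_right (Dx u) (sexp u) (VV u (deg d)) d
    (fun q hq => sexp_eq u hu q (deg d) (deg_le_of_le hq))).symm



def TT : PS := MvPowerSeries.monomial e2 (vb 1)

def hh : PS := fun d => if d 1 = 0 ∧ d 2 = 1 then ((d 0).factorial : ℚ)⁻¹ • vb (d 0 + 1) else 0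

@[simp] lemma add_e0_0 (d : Fin 3 →₀ ℕ) : (d + e0) 0 = d 0 + 1 := by
  rw [Finsupp.add_apply, e0_apply0]
@[simp] lemma add_e0_1 (d : Fin 3 →₀ ℕ) : (d + e0) 1 = d 1 := by
  rw [Finsupp.add_apply, e0_apply1, add_zero]
@[simp] lemma add_e0_2 (d : Fin 3 →₀ ℕ) : (d + e0) 2 = d 2 := by
  rw [Finsupp.add_apply, e0_apply2, add_zero]
@[simp] lemma sub_e2_0 (d : Fin 3 →₀ ℕ) : (d - e2) 0 = d 0 := by
  rw [Finsupp.tsub_apply, e2_apply0]; rfl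
@[simp] lemma sub_e2_1 (d : Fin 3 →₀ ℕ) : (d - e2) 1 = d 1 := by
  rw [Finsupp.tsub_apply, e2_apply1]; rfl
@[simp] lemma sub_e2_2 (d : Fin 3 →₀ ℕ) : (d - e2) 2 = d 2 - 1 := by
  rw [Finsupp.tsub_apply, e2_apply2]

lemma e2_le_iff (d : Fin 3 →₀ ℕ) : e2 ≤ d ↔ 1 ≤ d 2 := by
  rw [Finsupp.le_def]
  constructor
  · intro h; simpa using h 2
  · intro h a
    fin_cases a
    · simp
    · simp
    · simpa using h

lemma TT_mul_coeff (f : PS) (d : Fin 3 →₀ ℕ) :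
    (TT * f) d = if 1 ≤ d 2 then vb 1 * f (d - e2) else 0 := by
  rw [show (TT * f) d = MvPowerSeries.coeff d (TT * f) from rfl, TT,
    MvPowerSeries.coeff_monomial_mul]
  by_cases h : 1 ≤ d 2
  · rw [if_pos ((e2_le_iff d).mpr h), if_pos h]; rfl
  · rw [if_neg (fun hc => h ((e2_le_iff d).mp hc)), if_neg h]

lemma polyLift_coeff (p : Polynomial RR) (k : ℕ) :
    (polyLift del p).coeff k = del (p.coeff k) := by
  rw [polyLift, Polynomial.sum, Polynomial.finset_sum_coeff]
  simp only [Polynomial.coeff_C_mul, Polynomial.coeff_X_pow]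
  have : ∀ i ∈ p.support, del (p.coeff i) * (if k = i then (1:RR) else 0)
      = if i = k then del (p.coeff i) else 0 := by
    intro i _
    by_cases h : i = k
    · subst h; simp
    · rw [if_neg (fun hc => h hc.symm), if_neg h, mul_zero]
  rw [Finset.sum_congr rfl this, Finset.sum_ite_eq' p.support k (fun i => del (p.coeff i))]
  by_cases hk : k ∈ p.support
  · rw [if_pos hk]
  · rw [if_neg hk, Polynomial.notMem_support_iff.mp hk, del_zero]

lemma rBell_succ (n k r : ℕ) :
    rBell (n + 1) (k + 1) r = vb 1 * rBell n k r + del (rBell n (k + 1) r) := by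
  rw [rBell, Function.iterate_succ_apply', EOp, Polynomial.coeff_add, polyLift_coeff,
    mul_assoc, Polynomial.coeff_C_mul, Polynomial.coeff_X_mul]
  rfl

lemma rBell_succ_zero (n r : ℕ) : rBell (n + 1) 0 r = del (rBell n 0 r) := by
  rw [rBell, Function.iterate_succ_apply', EOp, Polynomial.coeff_add, polyLift_coeff,
    mul_assoc, Polynomial.coeff_C_mul, Polynomial.mul_coeff_zero, Polynomial.coeff_X_zero,
    zero_mul, mul_zero, zero_add]
  rfl

lemma rBell_zero (k r : ℕ) : rBell 0 k r = if k = 0 then va 1 ^ r else 0 := by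
  rw [rBell, Function.iterate_zero_apply, Polynomial.coeff_C]

lemma rBell_high : ∀ n k r : ℕ, n < k → rBell n k r = 0 := by
  intro n
  induction n with
  | zero => intro k r h; rw [rBell_zero, if_neg (by omega)]
  | succ n ih =>
    intro k r h
    obtain ⟨k', rfl⟩ : ∃ k', k = k' + 1 := ⟨k - 1, by omega⟩
    rw [rBell_succ]
    rw [ih k' r (by omega), ih (k' + 1) r (by omega), mul_zero, del_zero, add_zero]

lemma qfact_scalar (n b : ℕ) (z : RR) :
    (n + 1) • ((((n + 1).factorial : ℚ) * (b.factorial : ℚ))⁻¹ • z)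
      = (((n.factorial : ℚ) * (b.factorial : ℚ))⁻¹ • z) := by
  rw [← Nat.cast_smul_eq_nsmul ℚ, smul_smul]
  congr 1
  rw [Nat.factorial_succ]
  have h1 : (n.factorial : ℚ) ≠ 0 := Nat.cast_ne_zero.mpr (Nat.factorial_ne_zero _)
  have h2 : (b.factorial : ℚ) ≠ 0 := Nat.cast_ne_zero.mpr (Nat.factorial_ne_zero _)
  push_cast
  field_simp

lemma Sgen_eq : Dx Sgen = Dc Sgen + TT * Sgen := by
  funext d
  rw [PS_add_apply, TT_mul_coeff]
  show (d 0 + 1) • Sgen (d + e0) = del (Sgen d) + _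
  rw [show Sgen (d + e0) = if d 2 ≤ d 0 + 1 then
      ((((d 0) + 1).factorial : ℚ) * ((d 1).factorial : ℚ))⁻¹ • rBell (d 0 + 1) (d 2) (d 1)
      else 0 by rw [Sgen]; simp]
  rcases Nat.eq_zero_or_pos (d 2) with h2 | h2
  · -- γ = 0
    rw [h2]
    rw [if_pos (by omega), if_neg (by omega), add_zero, qfact_scalar, rBell_succ_zero,
      Sgen, if_pos (by omega), h2, del_smul]
  · obtain ⟨k, hk2⟩ : ∃ k, d 2 = k + 1 := ⟨d 2 - 1, by omega⟩
    have hsub : Sgen (d - e2) = if k ≤ d 0 then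
        (((d 0).factorial : ℚ) * ((d 1).factorial : ℚ))⁻¹ • rBell (d 0) k (d 1)
        else 0 := by
      rw [Sgen]; simp [hk2]
    have hcur : Sgen d = if k + 1 ≤ d 0 then
        (((d 0).factorial : ℚ) * ((d 1).factorial : ℚ))⁻¹ • rBell (d 0) (k + 1) (d 1)
        else 0 := by rw [Sgen, hk2]
    rw [hk2, hcur, hsub]
    by_cases hle : k + 1 ≤ d 0 + 1
    · by_cases hle2 : k + 1 ≤ d 0
      · rw [if_pos hle, if_pos hle2, if_pos (show 1 ≤ k + 1 by omega),
          if_pos (show k ≤ d 0 by omega), qfact_scalar, rBell_succ, del_smul, smul_add,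
          mul_smul_comm]
        ring
      · rw [if_pos hle, if_neg hle2, if_pos (show 1 ≤ k + 1 by omega),
          if_pos (show k ≤ d 0 by omega), qfact_scalar, rBell_succ,
          rBell_high (d 0) (k + 1) (d 1) (by omega), del_zero, add_zero,
          zero_add, mul_smul_comm]
    · rw [if_neg hle, if_neg (show ¬ (k + 1 ≤ d 0) by omega),
        if_pos (show 1 ≤ k + 1 by omega), if_neg (show ¬ (k ≤ d 0) by omega)]
      simp [del_zero]



lemma PS_sum_apply {α : Type*} (s : Finset α) (F : α → PS) (d : Fin 3 →₀ ℕ) :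
    (∑ i ∈ s, F i) d = ∑ i ∈ s, F i d := by
  rw [show (∑ i ∈ s, F i) d = MvPowerSeries.coeff d (∑ i ∈ s, F i) from rfl, map_sum]
  rfl

lemma PS_monomial_apply (p e : Fin 3 →₀ ℕ) (a : RR) :
    (MvPowerSeries.monomial e a) p = if p = e then a else 0 :=
  MvPowerSeries.coeff_monomial p e a

lemma PS_monomial_mul_apply (e d : Fin 3 →₀ ℕ) (a : RR) (f : PS) :
    (MvPowerSeries.monomial e a * f) d = if e ≤ d then a * f (d - e) else 0 := by
  rw [show (MvPowerSeries.monomial e a * f) d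
    = MvPowerSeries.coeff d (MvPowerSeries.monomial e a * f) from rfl,
    MvPowerSeries.coeff_monomial_mul]
  rfl

lemma del_nsmul (n : ℕ) (x : RR) : del (n • x) = n • del x := by
  rw [← Nat.cast_smul_eq_nsmul ℚ, del_smul, Nat.cast_smul_eq_nsmul]

lemma del_sum {α : Type*} (s : Finset α) (F : α → RR) :
    del (∑ i ∈ s, F i) = ∑ i ∈ s, del (F i) := by
  rw [show del = ⇑delD.toLinearMap from rfl, map_sum]

lemma nsmul_qsmul (n : ℕ) (c : ℚ) (z : RR) : n • (c • z) = ((n : ℚ) * c) • z := by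
  rw [← Nat.cast_smul_eq_nsmul ℚ, smul_smul]

lemma del_iter_mul_vb1 (q : RR) : ∀ N : ℕ, del^[N] (q * vb 1)
    = ∑ m ∈ Finset.range (N + 1), N.choose m • (vb (m + 1) * del^[N - m] q) := by
  intro N
  induction N with
  | zero => simp [mul_comm]
  | succ N ih =>
    have hiter : ∀ (M : ℕ) (x : RR), del (del^[M] x) = del^[M + 1] x := fun M x =>
      (Function.iterate_succ_apply' del M x).symm
    rw [Function.iterate_succ_apply', ih, del_sum]
    have hterm : ∀ m ∈ Finset.range (N + 1),
        del (N.choose m • (vb (m + 1) * del^[N - m] q))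
        = N.choose m • (vb (m + 2) * del^[N - m] q)
          + N.choose m • (vb (m + 1) * del^[N + 1 - m] q) := by
      intro m hm
      simp only [Finset.mem_range] at hm
      rw [del_nsmul, del_mul, del_vb, hiter, smul_add,
        show N - m + 1 = N + 1 - m by omega, show m + 1 + 1 = m + 2 from rfl]
    rw [Finset.sum_congr rfl hterm, Finset.sum_add_distrib]
    have hB : ∑ m ∈ Finset.range (N + 1), N.choose m • (vb (m + 1) * del^[N + 1 - m] q)
        = (∑ m ∈ Finset.range N, N.choose (m + 1) • (vb (m + 2) * del^[N - m] q))
          + vb 1 * del^[N + 1] q := by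
      rw [Finset.sum_range_succ' (fun m => N.choose m • (vb (m + 1) * del^[N + 1 - m] q)) N]
      have t0 : ∀ m ∈ Finset.range N,
          N.choose (m + 1) • (vb (m + 1 + 1) * del^[N + 1 - (m + 1)] q)
          = N.choose (m + 1) • (vb (m + 2) * del^[N - m] q) := by
        intro m hm
        simp only [Finset.mem_range] at hm
        rw [show N + 1 - (m + 1) = N - m by omega, show m + 1 + 1 = m + 2 from rfl]
      rw [Finset.sum_congr rfl t0]
      simp only [Nat.choose_zero_right, one_smul, Nat.sub_zero, zero_add]
    have hRHS : ∑ m ∈ Finset.range (N + 1 + 1),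
        (N + 1).choose m • (vb (m + 1) * del^[N + 1 - m] q)
        = (∑ m ∈ Finset.range (N + 1), N.choose m • (vb (m + 2) * del^[N - m] q))
          + ((∑ m ∈ Finset.range N, N.choose (m + 1) • (vb (m + 2) * del^[N - m] q))
            + vb 1 * del^[N + 1] q) := by
      rw [Finset.sum_range_succ'
        (fun m => (N + 1).choose m • (vb (m + 1) * del^[N + 1 - m] q)) (N + 1)]
      have t1 : ∀ m ∈ Finset.range (N + 1),
          (N + 1).choose (m + 1) • (vb (m + 1 + 1) * del^[N + 1 - (m + 1)] q)
          = N.choose m • (vb (m + 2) * del^[N - m] q)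
            + N.choose (m + 1) • (vb (m + 2) * del^[N - m] q) := by
        intro m hm
        simp only [Finset.mem_range] at hm
        rw [show N + 1 - (m + 1) = N - m by omega, show m + 1 + 1 = m + 2 from rfl,
          Nat.choose_succ_succ, add_smul]
      rw [Finset.sum_congr rfl t1, Finset.sum_add_distrib]
      have t2 : ∑ m ∈ Finset.range (N + 1), N.choose (m + 1) • (vb (m + 2) * del^[N - m] q)
          = ∑ m ∈ Finset.range N, N.choose (m + 1) • (vb (m + 2) * del^[N - m] q) := by
        rw [Finset.sum_range_succ, Nat.choose_succ_self, zero_smul, add_zero]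
      rw [t2]
      simp only [Nat.choose_zero_right, one_smul, Nat.sub_zero, zero_add]
      rw [add_assoc]
    rw [hB, hRHS]

lemma single0_le_iff (m : ℕ) (d : Fin 3 →₀ ℕ) :
    Finsupp.single (0 : Fin 3) m + e2 ≤ d ↔ m ≤ d 0 ∧ 1 ≤ d 2 := by
  rw [Finsupp.le_def]
  constructor
  · intro h
    constructor
    · have := h 0
      simpa [Finsupp.single_apply] using this
    · have := h 2
      simpa [Finsupp.single_apply] using this
  · intro ⟨h0, h2⟩ a
    fin_cases a <;> simp [Finsupp.single_apply] <;> omega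

lemma eq_single0_add_e2_iff (m : ℕ) (p : Fin 3 →₀ ℕ) :
    p = Finsupp.single (0 : Fin 3) m + e2 ↔ p 0 = m ∧ p 1 = 0 ∧ p 2 = 1 := by
  constructor
  · intro h; subst h
    refine ⟨?_, ?_, ?_⟩ <;> simp [Finsupp.single_apply]
  · intro ⟨h0, h1, h2⟩
    refine fin3_ext ?_ ?_ ?_ <;> simp [Finsupp.single_apply, h0, h1, h2]

@[simp] lemma subm_0 (d : Fin 3 →₀ ℕ) (m : ℕ) :
    (d - Finsupp.single (0 : Fin 3) m - e2) 0 = d 0 - m := by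
  rw [Finsupp.tsub_apply, Finsupp.tsub_apply, e2_apply0, Finsupp.single_apply]
  simp
@[simp] lemma subm_1 (d : Fin 3 →₀ ℕ) (m : ℕ) :
    (d - Finsupp.single (0 : Fin 3) m - e2) 1 = d 1 := by
  rw [Finsupp.tsub_apply, Finsupp.tsub_apply, e2_apply1, Finsupp.single_apply]
  simp
@[simp] lemma subm_2 (d : Fin 3 →₀ ℕ) (m : ℕ) :
    (d - Finsupp.single (0 : Fin 3) m - e2) 2 = d 2 - 1 := by
  rw [Finsupp.tsub_apply, Finsupp.tsub_apply, e2_apply2, Finsupp.single_apply]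
  simp

lemma hh_mul_coeff (f : PS) (d : Fin 3 →₀ ℕ) :
    (hh * f) d = if 1 ≤ d 2 then
      ∑ m ∈ Finset.range (d 0 + 1),
        ((m.factorial : ℚ))⁻¹ • (vb (m + 1) * f (d - Finsupp.single 0 m - e2))
    else 0 := by
  classical
  set g : PS := ∑ m ∈ Finset.range (d 0 + 1),
    MvPowerSeries.monomial (Finsupp.single 0 m + e2) (((m.factorial : ℚ))⁻¹ • vb (m + 1))
    with hg
  have step1 : (hh * f) d = (g * f) d := by
    rw [mul_comm hh f, mul_comm g f]
    apply mul_congr_right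
    intro p hp
    have hp0 : p 0 ≤ d 0 := Finsupp.le_def.mp hp 0
    by_cases hcond : p 1 = 0 ∧ p 2 = 1
    · have hpval : p = Finsupp.single (0 : Fin 3) (p 0) + e2 :=
        (eq_single0_add_e2_iff (p 0) p).mpr ⟨rfl, hcond.1, hcond.2⟩
      rw [hh, if_pos hcond, hg]
      rw [PS_sum_apply]
      rw [Finset.sum_eq_single (p 0)]
      · rw [PS_monomial_apply, if_pos hpval]
      · intro m _ hm
        rw [PS_monomial_apply, if_neg]
        intro hc
        exact hm (((eq_single0_add_e2_iff m p).mp hc).1.symm)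
      · intro hc
        exact absurd (Finset.mem_range.mpr (by omega)) hc
    · rw [hh, if_neg hcond, hg]
      rw [PS_sum_apply]
      symm
      refine Finset.sum_eq_zero fun m _ => ?_
      rw [PS_monomial_apply, if_neg]
      intro hc
      obtain ⟨_, h1, h2⟩ := (eq_single0_add_e2_iff m p).mp hc
      exact hcond ⟨h1, h2⟩
  rw [step1, hg, Finset.sum_mul, PS_sum_apply]
  by_cases h2 : 1 ≤ d 2
  · rw [if_pos h2]
    refine Finset.sum_congr rfl fun m hm => ?_
    simp only [Finset.mem_range] at hm
    rw [PS_monomial_mul_apply, if_pos ((single0_le_iff m d).mpr ⟨by omega, h2⟩)]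
    rw [tsub_add_eq_tsub_tsub d (Finsupp.single 0 m) e2, smul_mul_assoc]
  · rw [if_neg h2]
    refine Finset.sum_eq_zero fun m _ => ?_
    rw [PS_monomial_mul_apply, if_neg]
    intro hc
    exact h2 ((single0_le_iff m d).mp hc).2


lemma collapse3 (n : ℕ) (c : ℚ) (C : ℕ) (x : RR) :
    n • (c • (C • x)) = ((n : ℚ) * c * (C : ℚ)) • x := by
  rw [← Nat.cast_smul_eq_nsmul ℚ C, ← Nat.cast_smul_eq_nsmul ℚ n, smul_smul, smul_smul]

lemma collapse2 (c : ℚ) (C : ℕ) (x : RR) : c • (C • x) = (c * (C : ℚ)) • x := by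
  rw [← Nat.cast_smul_eq_nsmul ℚ C, smul_smul]

lemma collapse_mul (c c' : ℚ) (a w : RR) : c • (a * (c' • w)) = (c * c') • (a * w) := by
  rw [mul_smul_comm, smul_smul]

lemma fact_ne (j : ℕ) : (j.factorial : ℚ) ≠ 0 := Nat.cast_ne_zero.mpr (Nat.factorial_ne_zero _)

lemma qcore (N' k m β : ℕ) (hm : m ≤ N' + 1) :
    ((N' : ℚ) + 1 + k + 1) * ((((N' + 1).factorial : ℚ) * (β.factorial : ℚ)
        * ((k + 1).factorial : ℚ))⁻¹) * (((N' + 1).choose m : ℚ))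
    = (((N'.factorial : ℚ) * (β.factorial : ℚ) * ((k + 1).factorial : ℚ))⁻¹)
        * (((N' + 1).choose m : ℚ))
      + ((m.factorial : ℚ))⁻¹ * ((((N' + 1 - m).factorial : ℚ) * (β.factorial : ℚ)
        * (k.factorial : ℚ))⁻¹) := by
  rw [Nat.cast_choose ℚ hm, Nat.factorial_succ N', Nat.factorial_succ k]
  push_cast
  field_simp
  ring

lemma qcore0 (n β : ℕ) :
    ((n : ℚ) + 1) * ((((0:ℕ).factorial : ℚ) * (β.factorial : ℚ) * ((n + 1).factorial : ℚ))⁻¹)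
        * (((0:ℕ).choose 0 : ℚ))
    = (((0:ℕ).factorial : ℚ))⁻¹ * ((((0:ℕ).factorial : ℚ) * (β.factorial : ℚ)
        * (n.factorial : ℚ))⁻¹) := by
  rw [Nat.factorial_succ n, Nat.choose_zero_right]
  push_cast
  field_simp
  ring

lemma qcaseA (n β : ℕ) :
    ((n : ℚ) + 1) * (((n + 1).factorial : ℚ) * (β.factorial : ℚ)
      * ((0:ℕ).factorial : ℚ))⁻¹
    = ((n.factorial : ℚ) * (β.factorial : ℚ) * ((0:ℕ).factorial : ℚ))⁻¹ := by
  rw [Nat.factorial_succ n]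
  push_cast
  field_simp

lemma Sbul_eq : Dx Sbul = Dc Sbul + hh * Sbul := by
  funext d
  rw [PS_add_apply, hh_mul_coeff]
  show (d 0 + 1) • Sbul (d + e0) = del (Sbul d) + _
  simp only [Sbul, add_e0_0, add_e0_1, add_e0_2, subm_0, subm_1, subm_2]
  rcases Nat.eq_zero_or_pos (d 2) with h2 | h2
  · -- γ = 0
    rw [h2, if_pos (by omega), if_pos (by omega), if_neg (by omega), add_zero]
    simp only [Nat.sub_zero]
    rw [del_smul,
      show del (del^[d 0] (va 1 ^ d 1 * vb 1 ^ 0)) = del^[d 0 + 1] (va 1 ^ d 1 * vb 1 ^ 0) from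
        (Function.iterate_succ_apply' del (d 0) _).symm,
      nsmul_qsmul]
    congr 1
    push_cast
    exact qcaseA (d 0) (d 1)
  · obtain ⟨k, hk2⟩ : ∃ k, d 2 = k + 1 := ⟨d 2 - 1, by omega⟩
    rw [hk2]
    simp only [Nat.add_sub_cancel]
    by_cases hle : k + 1 ≤ d 0 + 1
    · rw [if_pos hle, if_pos (by omega : 1 ≤ k + 1)]
      have hq : va 1 ^ d 1 * vb 1 ^ (k + 1) = (va 1 ^ d 1 * vb 1 ^ k) * vb 1 := by
        rw [pow_succ, ← mul_assoc]
      set q : RR := va 1 ^ d 1 * vb 1 ^ k with hqdef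
      -- RHS2 : shrink the sum to range (d 0 - k + 1)
      have hshrink : ∑ m ∈ Finset.range (d 0 + 1), ((m.factorial : ℚ))⁻¹ •
            (vb (m + 1) * (if k ≤ d 0 - m then
              (((d 0 - m - k).factorial : ℚ) * ((d 1).factorial : ℚ)
                * (k.factorial : ℚ))⁻¹ • del^[d 0 - m - k] q else 0))
          = ∑ m ∈ Finset.range (d 0 - k + 1), (((m.factorial : ℚ))⁻¹
              * (((d 0 - k - m).factorial : ℚ) * ((d 1).factorial : ℚ)
                * (k.factorial : ℚ))⁻¹) • (vb (m + 1) * del^[d 0 - k - m] q) := by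
        rw [← Finset.sum_subset (Finset.range_subset_range.mpr (by omega : d 0 - k + 1 ≤ d 0 + 1))]
        · refine Finset.sum_congr rfl fun m hm => ?_
          simp only [Finset.mem_range] at hm
          rw [if_pos (by omega : k ≤ d 0 - m), show d 0 - m - k = d 0 - k - m by omega,
            collapse_mul]
        · intro m hm hm'
          simp only [Finset.mem_range] at hm hm'
          rw [if_neg (by omega : ¬ k ≤ d 0 - m), mul_zero, smul_zero]
      rw [hshrink]
      -- LHS
      rw [show d 0 + 1 - (k + 1) = d 0 - k by omega, hq, del_iter_mul_vb1 q (d 0 - k),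
        Finset.smul_sum, Finset.smul_sum]
      by_cases hkd : k + 1 ≤ d 0
      · rw [if_pos hkd, del_smul,
          show del (del^[d 0 - (k + 1)] (q * vb 1))
            = del^[d 0 - (k + 1) + 1] (q * vb 1) from
            (Function.iterate_succ_apply' del _ _).symm,
          show d 0 - (k + 1) + 1 = d 0 - k by omega, del_iter_mul_vb1 q (d 0 - k),
          Finset.smul_sum, ← Finset.sum_add_distrib]
        refine Finset.sum_congr rfl fun m hm => ?_
        simp only [Finset.mem_range] at hm
        rw [collapse3, collapse2]
        obtain ⟨N', hN'⟩ : ∃ N', d 0 - k = N' + 1 := ⟨d 0 - k - 1, by omega⟩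
        have hd0 : d 0 = N' + 1 + k := by omega
        rw [hN', show d 0 - (k + 1) = N' by omega, hd0]
        push_cast
        rw [← add_smul]
        congr 1
        exact qcore N' k m (d 1) (by omega)
      · -- k = d 0, N = 0
        rw [if_neg hkd, del_zero, zero_add, show d 0 - k = 0 by omega,
          Finset.sum_range_one, Finset.sum_range_one, collapse3]
        have hd0 : d 0 = k := by omega
        rw [hd0]
        congr 1
        push_cast
        exact qcore0 k (d 1)
    · -- γ > n + 1
      rw [if_neg hle, if_neg (by omega : ¬ k + 1 ≤ d 0), if_pos (by omega : 1 ≤ k + 1),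
        smul_zero, del_zero, zero_add]
      symm
      refine Finset.sum_eq_zero fun m hm => ?_
      rw [if_neg (by omega : ¬ k ≤ d 0 - m), mul_zero, smul_zero]



lemma PS_sub_apply (f g : PS) (d : Fin 3 →₀ ℕ) : (f - g) d = f d - g d := rfl

lemma Zarg_zero : Zarg 0 = 0 := by
  rw [Zarg]
  simp

lemma eq_e2_iff (d : Fin 3 →₀ ℕ) : d = e2 ↔ d 0 = 0 ∧ d 1 = 0 ∧ d 2 = 1 := by
  constructor
  · intro h; subst h; exact ⟨e2_apply0, e2_apply1, e2_apply2⟩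
  · intro ⟨h0, h1, h2⟩
    exact fin3_ext (by simp [h0]) (by simp [h1]) (by simp [h2])

lemma qZ (i : ℕ) :
    (-(((i : ℚ) + 1 - 1) / (((i + 1).factorial : ℚ))))
    = (((i : ℚ) + 1) + 1) * (-(((i : ℚ) + 1 + 1 - 1) / (((i + 2).factorial : ℚ))))
      + (((i + 1).factorial : ℚ))⁻¹ := by
  rw [show (i + 2) = (i + 1) + 1 from rfl, Nat.factorial_succ (i + 1)]
  push_cast
  have h1 : ((i + 1).factorial : ℚ) ≠ 0 := fact_ne _
  field_simp
  ring

lemma Zarg_eq : Dc Zarg = Dx Zarg + hh - TT := by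
  funext d
  rw [PS_sub_apply, PS_add_apply]
  show del (Zarg d) = (d 0 + 1) • Zarg (d + e0) + hh d - TT d
  rw [TT, PS_monomial_apply]
  by_cases hc : d 1 = 0 ∧ d 2 = 1
  · have hZd : Zarg (d + e0) = if 2 ≤ d 0 + 1 then
        (-(((d 0 : ℚ) + 1 - 1) / (((d 0 + 1).factorial : ℚ)))) • vb (d 0 + 1) else 0 := by
      rw [Zarg]
      simp [hc.1, hc.2]
    rw [hZd, hh, if_pos hc, Zarg]
    rcases Nat.lt_or_ge (d 0) 1 with h0 | h0
    · -- d 0 = 0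
      have h00 : d 0 = 0 := by omega
      rw [if_neg (by omega), del_zero, if_neg (by omega), smul_zero,
        if_pos ((eq_e2_iff d).mpr ⟨h00, hc.1, hc.2⟩), zero_add, h00]
      simp
    · rcases Nat.lt_or_ge (d 0) 2 with h1 | h1
      · -- d 0 = 1
        have h01 : d 0 = 1 := by omega
        rw [if_neg (by omega), del_zero, if_pos (by omega),
          if_neg (by rw [eq_e2_iff]; omega), sub_zero, h01, nsmul_qsmul, ← add_smul]
        norm_num [Nat.factorial]
      · -- d 0 ≥ 2
        rw [if_pos ⟨hc.1, hc.2, h1⟩, if_pos (by omega),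
          if_neg (by rw [eq_e2_iff]; omega), sub_zero, del_smul, del_vb, nsmul_qsmul,
          ← add_smul]
        congr 1
        obtain ⟨i, hi⟩ : ∃ i, d 0 = i + 1 := ⟨d 0 - 1, by omega⟩
        rw [hi]
        push_cast
        rw [show i + 1 + 1 = i + 2 from rfl]
        exact qZ i
  · have hZd : Zarg (d + e0) = 0 := by
      rw [Zarg, if_neg]
      simp only [add_e0_1, add_e0_2]
      tauto
    have hZd' : Zarg d = 0 := by
      rw [Zarg, if_neg]
      tauto
    rw [hZd, hZd', del_zero, smul_zero, hh, if_neg hc,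
      if_neg (by rw [eq_e2_iff]; tauto)]
    simp

lemma Zarg_pow_x0 (j : ℕ) (q : Fin 3 →₀ ℕ) (hq : q 0 = 0) :
    (Zarg ^ (j + 1)) q = 0 := by
  rw [pow_succ', show (Zarg * Zarg ^ j) q = MvPowerSeries.coeff q (Zarg * Zarg ^ j) from rfl,
    MvPowerSeries.coeff_mul]
  refine Finset.sum_eq_zero fun p hp => ?_
  rw [Finset.HasAntidiagonal.mem_antidiagonal] at hp
  have hp0 : p.1 0 = 0 := by
    have := coord_eq hp 0
    omega
  rw [show MvPowerSeries.coeff p.1 Zarg = Zarg p.1 from rfl, Zarg, if_neg (by omega),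
    zero_mul]

lemma sexp_Zarg_x0 (q : Fin 3 →₀ ℕ) (hq : q 0 = 0) :
    sexp Zarg q = if q = 0 then 1 else 0 := by
  have hL : sexp Zarg q = ∑ j ∈ Finset.range (deg q + 1),
      (j.factorial : ℚ)⁻¹ • ((Zarg ^ j) q) := by
    rw [sexp, show q.sum (fun _ m => m) = deg q from rfl, map_sum]
    rfl
  rw [hL, Finset.sum_eq_single 0]
  · rw [pow_zero, Nat.factorial_zero, Nat.cast_one, inv_one, one_smul,
      show (1 : PS) q = MvPowerSeries.coeff q 1 from rfl, MvPowerSeries.coeff_one]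
  · intro j _ hj
    obtain ⟨j', rfl⟩ : ∃ j', j = j' + 1 := ⟨j - 1, by omega⟩
    rw [Zarg_pow_x0 j' q hq, smul_zero]
  · intro h
    exact absurd (Finset.mem_range.mpr (by omega)) h

lemma base_case : ∀ d : Fin 3 →₀ ℕ, d 0 = 0 → Sgen d = (Sbul * sexp Zarg) d := by
  intro d h0
  have hE : ∀ q ≤ d, sexp Zarg q = (1 : PS) q := by
    intro q hq
    have hq0 : q 0 = 0 := by
      have := Finsupp.le_def.mp hq 0
      omega
    rw [sexp_Zarg_x0 q hq0, show (1 : PS) q = MvPowerSeries.coeff q 1 from rfl,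
      MvPowerSeries.coeff_one]
  rw [show (Sbul * sexp Zarg) d = (Sbul * 1) d from mul_congr_right _ _ _ d hE, mul_one]
  rw [Sgen, Sbul, h0]
  by_cases h2 : d 2 = 0
  · rw [h2, if_pos (le_refl 0), if_pos (le_refl 0), rBell_zero, if_pos rfl]
    simp only [Nat.sub_zero, Nat.factorial_zero, Function.iterate_zero_apply, pow_zero,
      mul_one, Nat.cast_one, one_mul]
  · rw [if_neg (by omega), if_neg (by omega)]

lemma uniq (F G : PS) (hF : Dx F = Dc F + TT * F) (hG : Dx G = Dc G + TT * G)
    (h0 : ∀ d, d 0 = 0 → F d = G d) : F = G := by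
  funext d
  suffices h : ∀ n : ℕ, ∀ d : Fin 3 →₀ ℕ, d 0 = n → F d = G d from h (d 0) d rfl
  intro n
  induction n with
  | zero => exact fun d hd => h0 d hd
  | succ n ih =>
    intro d hd
    set d' := d - e0 with hd'def
    have hdd : d' + e0 = d := by
      refine fin3_ext ?_ ?_ ?_ <;>
        simp only [hd'def, Finsupp.add_apply, Finsupp.tsub_apply, e0_apply0, e0_apply1,
          e0_apply2] <;> omega
    have hd'0 : d' 0 = n := by
      rw [hd'def, Finsupp.tsub_apply, e0_apply0]
      omega
    have hF' := congrFun hF d'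
    have hG' := congrFun hG d'
    rw [show Dx F d' = (d' 0 + 1) • F (d' + e0) from rfl, hdd, hd'0, PS_add_apply,
      TT_mul_coeff] at hF'
    rw [show Dx G d' = (d' 0 + 1) • G (d' + e0) from rfl, hdd, hd'0, PS_add_apply,
      TT_mul_coeff] at hG'
    have hRHS : Dc F d' + (if 1 ≤ d' 2 then vb 1 * F (d' - e2) else 0)
        = Dc G d' + (if 1 ≤ d' 2 then vb 1 * G (d' - e2) else 0) := by
      have e1 : F d' = G d' := ih d' hd'0
      have e2' : F (d' - e2) = G (d' - e2) := ih (d' - e2) (by rw [sub_e2_0]; exact hd'0)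
      show del (F d') + _ = del (G d') + _
      rw [e1, e2']
    have hfin : (n + 1) • F d = (n + 1) • G d := by rw [hF', hG', hRHS]
    rw [← Nat.cast_smul_eq_nsmul ℚ, ← Nat.cast_smul_eq_nsmul ℚ] at hfin
    have hne : ((n : ℚ) + 1) ≠ 0 := by positivity
    have h2 := congrArg (fun x => (((n + 1 : ℕ) : ℚ))⁻¹ • x) hfin
    simpa [smul_smul, inv_mul_cancel₀ hne] using h2

/-- In `R⟦x,y,t⟧`,
`S(t,x,y) = S^•(xt,x,y) · Z(x,t)` where
`S(t,x,y) = ∑_{r≥0} ∑_{n≥k≥0} B^r_{n+r,k+r} x^n y^r t^k/(n!·r!)`,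
`S^•(xt,x,y) = ∑_{n,r,k≥0} ∂^n(a_1^r b_1^k)·x^{n+k} y^r t^k/(n!·r!·k!)` and
`Z(x,t) = exp(−t·∑_{i≥2} ((i−1)/i!)·b_i x^i)`. -/
theorem stmt5 : Sgen = Sbul * sexp Zarg := by
  have hprod : Dx (Sbul * sexp Zarg) = Dc (Sbul * sexp Zarg) + TT * (Sbul * sexp Zarg) := by
    rw [Dx_mul, Dc_mul, Sbul_eq, Dx_sexp Zarg Zarg_zero, Dc_sexp Zarg Zarg_zero, Zarg_eq]
    ring
  exact uniq Sgen (Sbul * sexp Zarg) Sgen_eq hprod base_case
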